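/- For every natural number n, a(n) = (2/π) · ∫_0^π (2cos θ)^n · (1 + cos θ)/2 dθ. -/

import Mathlib

open Filter Real

/-- `aa n m` = number of length-`n` paths on `ℤ≥0` with steps `±1` starting at `0`
and ending at `m`. -/
def aa : ℕ → ℕ → ℕ
  | 0, m => if m = 0 then 1 else 0
  | n+1, m => aa n (m+1) + (if m = 0 then 0 else aa n (m-1))

/-- `aSum n = Σ_{m=0}^n aa n m`. -/
def aSum (n : ℕ) : ℕ := ∑ m ∈ Finset.range (n+1), aa n m

/-- The modular variant `b(n,m)` depending on `ℓ`:
`b(n,m) = a(n,m)` if `m ≡ ℓ-1 (mod ℓ)`; otherwise `b(0,m) = δ_{m,0}`, and for `n ≥ 1`,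
`b(n,m) = b(n-1,m-1) + b(n-1,m+1)` if `m % ℓ < ℓ-2` (negative-index terms are `0`),
and `b(n,m) = b(n-1,m-1)` if `m ≡ ℓ-2 (mod ℓ)`. -/
def bb (ℓ : ℕ) : ℕ → ℕ → ℕ
  | 0, m => if m % ℓ = ℓ - 1 then aa 0 m else if m = 0 then 1 else 0
  | n+1, m =>
    if m % ℓ = ℓ - 1 then aa (n+1) m
    else if m % ℓ = ℓ - 2 then (if m = 0 then 0 else bb ℓ n (m-1))
    else (if m = 0 then 0 else bb ℓ n (m-1)) + bb ℓ n (m+1)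

/-- `bSum ℓ n = Σ_{m=0}^n bb ℓ n m`. -/
def bSum (ℓ : ℕ) (n : ℕ) : ℕ := ∑ m ∈ Finset.range (n+1), bb ℓ n m

/-- `cc ℓ n r = Σ_{m ≥ 0, m ≡ r (mod ℓ)} aa n m` (finite since `aa n m = 0` for `m > n`). -/
def cc (ℓ : ℕ) (n r : ℕ) : ℕ :=
  ∑ m ∈ Finset.range (n+1), if m % ℓ = r then aa n m else 0

/-- `ww ℓ n = Σ_{0 ≤ m ≤ n, m ≡ ℓ-1 (mod ℓ)} bb ℓ n m`. -/
def ww (ℓ : ℕ) (n : ℕ) : ℕ :=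
  ∑ m ∈ Finset.range (n+1), if m % ℓ = ℓ - 1 then bb ℓ n m else 0


def gAux (n m : ℕ) : ℤ := if (n + m) % 2 = 0 then (n.choose ((n + m) / 2) : ℤ) else 0

lemma gAux_pascal (n m : ℕ) : gAux (n+1) (m+1) = gAux n m + gAux n (m+2) := by
  unfold gAux
  by_cases h : (n + m) % 2 = 0
  · have e1 : (n + 1 + (m + 1)) / 2 = (n + m) / 2 + 1 := by omega
    have e2 : (n + (m + 2)) / 2 = (n + m) / 2 + 1 := by omega
    rw [if_pos (by omega : (n + 1 + (m + 1)) % 2 = 0), if_pos h,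
      if_pos (by omega : (n + (m + 2)) % 2 = 0), e1, e2, Nat.choose_succ_succ]
    push_cast; ring
  · rw [if_neg (by omega), if_neg h, if_neg (by omega)]; ring

lemma gAux_zero (n : ℕ) : gAux (n+1) 0 = 2 * gAux n 1 := by
  unfold gAux
  by_cases h : n % 2 = 1
  · obtain ⟨k, rfl⟩ : ∃ k, n = 2 * k + 1 := ⟨n / 2, by omega⟩
    rw [if_pos (by omega), if_pos (by omega)]
    have e1 : (2 * k + 1 + 1 + 0) / 2 = k + 1 := by omega
    have e2 : (2 * k + 1 + 1) / 2 = k + 1 := by omega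
    rw [e1]
    simp only [add_zero] at *
    rw [Nat.choose_succ_succ]
    have : (2 * k + 1).choose k = (2 * k + 1).choose (k + 1) := by
      have := Nat.choose_symm (by omega : k + 1 ≤ 2 * k + 1)
      rwa [show 2 * k + 1 - (k + 1) = k by omega] at this
    rw [this]; push_cast; ring
  · rw [if_neg (by omega), if_neg (by omega)]; ring

lemma aa_eq (n : ℕ) : ∀ m, (aa n m : ℤ) = gAux n m - gAux n (m+2) := by
  induction n with
  | zero =>
    intro m
    match m with
    | 0 => simp [aa, gAux]
    | m+1 =>
      simp only [aa, if_neg (Nat.succ_ne_zero m)]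
      unfold gAux
      by_cases h : (0 + (m+1)) % 2 = 0
      · rw [if_pos h, if_pos (by omega)]
        rw [Nat.choose_eq_zero_of_lt (by omega), Nat.choose_eq_zero_of_lt (by omega)]
        simp
      · rw [if_neg h, if_neg (by omega)]; simp
  | succ n ih =>
    intro m
    match m with
    | 0 =>
      have ha : (aa (n+1) 0 : ℤ) = (aa n 1 : ℤ) := by simp [aa]
      rw [ha, ih 1, gAux_zero,
        show (0:ℕ)+2 = 1+1 by rfl, gAux_pascal]
      ring
    | k+1 =>
      simp only [aa, if_neg (Nat.succ_ne_zero k), Nat.add_sub_cancel]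
      rw [Nat.cast_add, ih (k+2), ih k, gAux_pascal,
        show k+1+2 = (k+2)+1 by ring, gAux_pascal]
      ring

lemma telescope (h : ℕ → ℤ) (n : ℕ) :
    ∑ m ∈ Finset.range (n+1), (h m - h (m+2)) = h 0 + h 1 - h (n+1) - h (n+2) := by
  induction n with
  | zero => simp [Finset.sum_range_one]
  | succ n ih => rw [Finset.sum_range_succ, ih]; ring

lemma aSum_eq (n : ℕ) : (aSum n : ℤ) = (n.choose (n / 2) : ℤ) := by
  have h1 : (aSum n : ℤ) = ∑ m ∈ Finset.range (n+1), (gAux n m - gAux n (m+2)) := by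
    unfold aSum
    push_cast
    exact Finset.sum_congr rfl fun m _ => aa_eq n m
  rw [h1, telescope]
  have h2 : gAux n (n+1) = 0 := by unfold gAux; rw [if_neg (by omega)]
  have h3 : gAux n (n+2) = 0 := by
    unfold gAux
    rw [if_pos (by omega), show (n + (n+2))/2 = n + 1 by omega, Nat.choose_succ_self]
    simp
  rw [h2, h3]
  by_cases h : n % 2 = 0
  · obtain ⟨k, rfl⟩ : ∃ k, n = 2 * k := ⟨n / 2, by omega⟩
    unfold gAux
    rw [if_pos (by omega), if_neg (by omega),
      show (2*k+0)/2 = k by omega, show 2*k/2 = k by omega]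
    ring
  · obtain ⟨k, rfl⟩ : ∃ k, n = 2 * k + 1 := ⟨n / 2, by omega⟩
    unfold gAux
    rw [if_neg (by omega), if_pos (by omega),
      show (2*k+1+1)/2 = k+1 by omega, show (2*k+1)/2 = k by omega]
    have : (2 * k + 1).choose k = (2 * k + 1).choose (k + 1) := by
      have := Nat.choose_symm (by omega : k + 1 ≤ 2 * k + 1)
      rwa [show 2 * k + 1 - (k + 1) = k by omega] at this
    rw [this]; ring


lemma J_odd (k : ℕ) : (∫ x in (0:ℝ)..π, Real.cos x ^ (2*k+1)) = 0 := by
  have h : (∫ x in (0:ℝ)..π, Real.cos (π - x) ^ (2*k+1))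
      = ∫ x in (0:ℝ)..π, Real.cos x ^ (2*k+1) := by
    simpa using intervalIntegral.integral_comp_sub_left
      (fun x => Real.cos x ^ (2*k+1)) π (a := 0) (b := π)
  have h2 : (∫ x in (0:ℝ)..π, Real.cos (π - x) ^ (2*k+1))
      = - ∫ x in (0:ℝ)..π, Real.cos x ^ (2*k+1) := by
    rw [← intervalIntegral.integral_neg]
    congr 1
    ext x
    rw [Real.cos_pi_sub, Odd.neg_pow ⟨k, by ring⟩]
  linarith [h.symm.trans h2]

lemma J_even (k : ℕ) : (∫ x in (0:ℝ)..π, Real.cos x ^ (2*k))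
    = π * (Nat.centralBinom k) / 4 ^ k := by
  induction k with
  | zero => simp
  | succ k ih =>
    have h := integral_cos_pow (a := 0) (b := π) (2*k)
    rw [show 2*k+2 = 2*(k+1) by ring] at h
    rw [h, ih, Real.sin_pi, Real.sin_zero]
    have hc : ((k:ℝ) + 1) * (Nat.centralBinom (k+1)) = 2 * (2*k+1) * (Nat.centralBinom k) := by
      exact_mod_cast congrArg (Nat.cast : ℕ → ℝ) (Nat.succ_mul_centralBinom_succ k)
    have h4 : (4:ℝ) ^ (k+1) = 4 * 4 ^ k := by ring
    field_simp
    push_cast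
    linear_combination ((2*(k:ℝ)+1)*π*(Nat.centralBinom k)) * h4 - 2*π*4^k * hc


/-- Spectral formula: `a(n) = (2/π)·∫₀^π (2cos θ)ⁿ·(1+cos θ)/2 dθ`. -/
theorem stmt17 (n : ℕ) :
    (aSum n : ℝ) =
      (2 / Real.pi) *
        ∫ θ in (0 : ℝ)..Real.pi, (2 * Real.cos θ) ^ n * ((1 + Real.cos θ) / 2) := by
  have hi1 : IntervalIntegrable (fun x => Real.cos x ^ n) MeasureTheory.volume 0 π :=
    (Real.continuous_cos.pow n).intervalIntegrable 0 π
  have hi2 : IntervalIntegrable (fun x => Real.cos x ^ (n+1)) MeasureTheory.volume 0 π :=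
    (Real.continuous_cos.pow (n+1)).intervalIntegrable 0 π
  have key : (∫ θ in (0:ℝ)..π, (2*Real.cos θ)^n * ((1+Real.cos θ)/2))
      = 2^n/2 * ((∫ x in (0:ℝ)..π, Real.cos x ^ n) + ∫ x in (0:ℝ)..π, Real.cos x ^ (n+1)) := by
    rw [← intervalIntegral.integral_add hi1 hi2, ← intervalIntegral.integral_const_mul]
    apply intervalIntegral.integral_congr
    intro θ _
    simp only
    ring
  rw [key]
  have hA : (aSum n : ℝ) = (n.choose (n/2) : ℝ) := by exact_mod_cast aSum_eq n
  rw [hA]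
  rcases Nat.even_or_odd n with h | h
  · obtain ⟨k, rfl⟩ : ∃ j, n = 2 * j := by obtain ⟨k, hk⟩ := h; exact ⟨k, by omega⟩
    rw [J_even k, show 2*k+1 = 2*k+1 from rfl, J_odd k,
      show (2*k)/2 = k by omega]
    have hcb : ((2*k).choose k : ℝ) = (Nat.centralBinom k : ℝ) := rfl
    have h2 : (2:ℝ)^(2*k) = 4^k := by rw [pow_mul]; norm_num
    rw [hcb, h2]
    have h4 : (4:ℝ)^k ≠ 0 := by positivity
    field_simp
    ring
  · obtain ⟨k, rfl⟩ : ∃ j, n = 2 * j + 1 := by obtain ⟨k, hk⟩ := h; exact ⟨k, by omega⟩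
    rw [J_odd k, show 2*k+1+1 = 2*(k+1) by ring, J_even (k+1),
      show (2*k+1)/2 = k by omega]
    have hnat : (Nat.centralBinom (k+1) : ℝ) = 2 * ((2*k+1).choose k : ℝ) := by
      have h1 : Nat.centralBinom (k+1) = (2*k+1+1).choose (k+1) := by
        unfold Nat.centralBinom
        congr 1
      have h2 : (2*k+1).choose k = (2*k+1).choose (k+1) := by
        have := Nat.choose_symm (by omega : k+1 ≤ 2*k+1)
        rwa [show 2*k+1 - (k+1) = k by omega] at this
      rw [h1, Nat.choose_succ_succ, ← h2]
      push_cast; ring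
    rw [hnat]
    have h2 : (2:ℝ)^(2*k+1) = 2 * 4^k := by rw [pow_succ, pow_mul]; norm_num [mul_comm]
    have h4 : (4:ℝ)^(k+1) = 4 * 4^k := by ring
    rw [h2, h4]
    have h4' : (4:ℝ)^k ≠ 0 := by positivity
    field_simp
    ring
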